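/- For all n ≥ 0 and k ≥ 2, the number of binary words of length n that do not contain k consecutive 1s equals f_{n+k,k}, where f is the k-step Fibonacci sequence defined by f_{n,k} = 0 for 0 ≤ n ≤ k−2, f_{k−1,k} = 1, and f_{n,k} = Σ_{i=1}^{k} f_{n−i,k} for n ≥ k. -/

import Mathlib

/-- A binary word (list of Booleans) avoids `k` consecutive 1s if it has
no contiguous factor equal to `1^k`. -/
def AvoidsOnes (k : ℕ) (w : List Bool) : Prop :=
  ¬ (List.replicate k true <:+: w)

instance (k : ℕ) (w : List Bool) : Decidable (AvoidsOnes k w) :=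
  inferInstanceAs (Decidable ¬ _)

/-- The number of binary words of length `n` avoiding `k` consecutive 1s. -/
def numAvoiding (n k : ℕ) : ℕ :=
  (Finset.univ.filter (fun w : Fin n → Bool => AvoidsOnes k (List.ofFn w))).card


section Aux
open List Finset


lemma prefix_of_prefix_append_false {x u v : List Bool} (hx : false ∉ x)
    (h : x <+: u ++ false :: v) : x <+: u := by
  induction x generalizing u with
  | nil => exact List.nil_prefix
  | cons b x' ih =>
    cases u with
    | nil =>
      rw [List.nil_append, List.cons_prefix_cons] at h
      exact absurd (h.1 ▸ (List.mem_cons_self (a := b) (l := x'))) hx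
    | cons a u' =>
      rw [List.cons_append, List.cons_prefix_cons] at h
      exact List.cons_prefix_cons.2 ⟨h.1, ih (fun hm => hx (List.mem_cons_of_mem _ hm)) h.2⟩

lemma infix_append_false {x : List Bool} (hx : false ∉ x) (u v : List Bool) :
    x <:+: u ++ false :: v ↔ x <:+: u ∨ x <:+: v := by
  induction u with
  | nil =>
    rw [List.nil_append, List.infix_cons_iff]
    constructor
    · rintro (h | h)
      · have := prefix_of_prefix_append_false (u := []) hx h
        simp only [List.prefix_nil] at this
        subst this; exact Or.inr List.nil_infix
      · exact Or.inr h
    · rintro (h | h)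
      · rw [List.infix_nil] at h; subst h; exact Or.inr List.nil_infix
      · exact Or.inr h
  | cons a u' ih =>
    rw [List.cons_append, List.infix_cons_iff]
    constructor
    · rintro (h | h)
      · have h' := prefix_of_prefix_append_false (u := a :: u') hx (by simpa using h)
        exact Or.inl h'.isInfix
      · rcases ih.1 h with h | h
        · exact Or.inl (List.infix_cons h)
        · exact Or.inr h
    · rintro (h | h)
      · rcases List.infix_cons_iff.1 h with h | h
        · exact Or.inl (h.trans ((a :: u').prefix_append (false :: v)))
        · exact Or.inr (ih.2 (Or.inl h))
      · exact Or.inr (ih.2 (Or.inr h))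

lemma false_not_mem_rep {m : ℕ} : false ∉ List.replicate m true := by
  intro h; exact absurd (List.eq_of_mem_replicate h) (by simp)

lemma rep_infix_rep {a b : ℕ} : List.replicate a true <:+: List.replicate b true ↔ a ≤ b := by
  constructor
  · intro h; simpa using h.length_le
  · intro h
    exact ⟨[], List.replicate (b - a) true, by rw [List.nil_append, ← List.replicate_add]; congr 1; omega⟩

lemma exists_decomp : ∀ (k : ℕ) (w : List Bool), ¬ (List.replicate k true <+: w) →
    k ≤ w.length → ∃ j, j < k ∧ ∃ v, w = List.replicate j true ++ false :: v := by
  intro k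
  induction k with
  | zero => intro w h _; exact absurd (List.nil_prefix (l := w)) h
  | succ k ih =>
    intro w h hl
    cases w with
    | nil => simp at hl
    | cons b w' =>
      cases b with
      | false => exact ⟨0, Nat.succ_pos _, w', by simp⟩
      | true =>
        have h' : ¬ (List.replicate k true <+: w') := fun hp =>
          h (by rw [List.replicate_succ]; exact List.cons_prefix_cons.2 ⟨rfl, hp⟩)
        obtain ⟨j, hj, v, hv⟩ := ih w' h' (by simpa using hl)
        exact ⟨j + 1, by omega, v, by rw [List.replicate_succ, List.cons_append, hv]⟩

lemma key_inj : ∀ (a : ℕ) {b : ℕ} {v v' : List Bool},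
    List.replicate a true ++ false :: v = List.replicate b true ++ false :: v' →
    a = b ∧ v = v' := by
  intro a
  induction a with
  | zero =>
    intro b v v' h
    cases b with
    | zero => simpa using h
    | succ b => rw [List.replicate_succ] at h; simp at h
  | succ a ih =>
    intro b v v' h
    cases b with
    | zero => rw [List.replicate_succ] at h; simp at h
    | succ b =>
      rw [List.replicate_succ, List.replicate_succ, List.cons_append, List.cons_append,
        List.cons_eq_cons] at h
      obtain ⟨ha, hv⟩ := ih h.2
      exact ⟨by omega, hv⟩

def T (n : ℕ) : Finset (List Bool) := (Finset.univ : Finset (Fin n → Bool)).image List.ofFn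

lemma mem_T {n : ℕ} {w : List Bool} : w ∈ T n ↔ w.length = n := by
  constructor
  · rintro h
    rw [T, Finset.mem_image] at h
    obtain ⟨g, -, rfl⟩ := h
    simp
  · intro h
    subst h
    exact Finset.mem_image.2 ⟨w.get, Finset.mem_univ _, List.ofFn_get w⟩

lemma card_T (n : ℕ) : (T n).card = 2 ^ n := by
  rw [T, Finset.card_image_of_injective _ List.ofFn_injective]
  simp

def A (k n : ℕ) : Finset (List Bool) := (T n).filter (AvoidsOnes k)

lemma numAvoiding_eq (n k : ℕ) : numAvoiding n k = (A k n).card := by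
  rw [A, T, Finset.filter_image, Finset.card_image_of_injective _ List.ofFn_injective,
    numAvoiding]

lemma A_eq_of_lt {k n : ℕ} (h : n < k) : A k n = T n := by
  apply Finset.filter_true_of_mem
  intro w hw hinf
  have := hinf.length_le
  rw [mem_T.1 hw] at this
  simp at this
  omega

lemma A_biUnion {k n : ℕ} (_hk : 1 ≤ k) (hn : k ≤ n) :
    A k n = (Finset.Icc 1 k).biUnion
      (fun i => (A k (n - i)).image (fun v => List.replicate (i - 1) true ++ false :: v)) := by
  ext w
  simp only [Finset.mem_biUnion, Finset.mem_image, Finset.mem_Icc, A, Finset.mem_filter, mem_T,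
    AvoidsOnes]
  constructor
  · rintro ⟨hlen, havoid⟩
    have hnp : ¬ (List.replicate k true <+: w) := fun hp => havoid hp.isInfix
    obtain ⟨j, hj, v, rfl⟩ := exists_decomp k w hnp (by omega)
    refine ⟨j + 1, ⟨by omega, by omega⟩, v, ⟨⟨?_, ?_⟩, ?_⟩⟩
    · simp at hlen; omega
    · intro hinf
      exact havoid ((infix_append_false false_not_mem_rep _ _).2 (Or.inr hinf))
    · simp
  · rintro ⟨i, ⟨hi1, hik⟩, v, ⟨hvlen, hvav⟩, rfl⟩
    constructor
    · simp; omega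
    · intro hinf
      rcases (infix_append_false false_not_mem_rep _ _).1 hinf with h | h
      · have := rep_infix_rep.1 h; omega
      · exact hvav h

lemma card_A_rec {k n : ℕ} (hk : 1 ≤ k) (hn : k ≤ n) :
    (A k n).card = ∑ i ∈ Finset.Icc 1 k, (A k (n - i)).card := by
  rw [A_biUnion hk hn, Finset.card_biUnion]
  · apply Finset.sum_congr rfl
    intro i _
    apply Finset.card_image_of_injective
    intro a b hab
    simpa using hab
  · intro i hi j hj hij
    rw [Function.onFun, Finset.disjoint_left]
    rintro w hwi hwj
    obtain ⟨v, -, rfl⟩ := Finset.mem_image.1 hwi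
    obtain ⟨v', -, heq⟩ := Finset.mem_image.1 hwj
    obtain ⟨ha, -⟩ := key_inj _ heq.symm
    simp only [Finset.mem_coe, Finset.mem_Icc] at hi hj
    omega

lemma pow_sum_aux : ∀ n : ℕ, 1 + ∑ t ∈ Finset.range n, 2 ^ t = 2 ^ n := by
  intro n
  induction n with
  | zero => simp
  | succ n ih => rw [Finset.sum_range_succ, ← Nat.add_assoc, ih, pow_succ]; omega


end Aux

theorem words_avoiding_counted_by_kstep_fibonacci
    (k : ℕ) (hk : 2 ≤ k) (f : ℕ → ℕ)
    (h0 : ∀ n ≤ k - 2, f n = 0)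
    (h1 : f (k - 1) = 1)
    (hrec : ∀ n, k ≤ n → f n = ∑ i ∈ Finset.Icc 1 k, f (n - i)) :
    ∀ n, numAvoiding n k = f (n + k) := by
  intro n
  induction n using Nat.strong_induction_on with
  | _ n ih =>
  rw [numAvoiding_eq]
  by_cases hn : k ≤ n
  · rw [card_A_rec (k := k) (by omega) hn, hrec (n + k) (by omega)]
    apply Finset.sum_congr rfl
    intro i hi
    simp only [Finset.mem_Icc] at hi
    have := ih (n - i) (by omega)
    rw [numAvoiding_eq] at this
    rw [this]
    congr 1
    omega
  · push_neg at hn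
    rw [A_eq_of_lt hn, card_T]
    rw [hrec (n + k) (by omega)]
    have step1 : ∑ i ∈ Finset.Icc 1 k, f (n + k - i) = ∑ j ∈ Finset.range k, f (n + j) := by
      rw [← Finset.Ico_add_one_right_eq_Icc, Finset.sum_Ico_eq_sum_range,
        ← Finset.sum_range_reflect (fun j => f (n + j)) k]
      apply Finset.sum_congr (by congr 1)
      intro i hi
      rw [Finset.mem_range] at hi
      congr 1
      omega
    rw [step1]
    have split : ∑ j ∈ Finset.range k, f (n + j)
        = ∑ j ∈ Finset.Ico 0 (k - n), f (n + j) + ∑ j ∈ Finset.Ico (k - n) k, f (n + j) := by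
      rw [Finset.sum_Ico_consecutive _ (by omega) (by omega), ← Finset.range_eq_Ico]
    have first : ∑ j ∈ Finset.Ico 0 (k - n), f (n + j) = 1 := by
      rw [← Finset.range_eq_Ico, show k - n = (k - n - 1) + 1 by omega, Finset.sum_range_succ]
      rw [show n + (k - n - 1) = k - 1 by omega, h1]
      rw [Finset.sum_eq_zero]
      intro j hj
      rw [Finset.mem_range] at hj
      exact h0 _ (by omega)
    have second : ∑ j ∈ Finset.Ico (k - n) k, f (n + j) = ∑ t ∈ Finset.range n, 2 ^ t := by
      rw [Finset.sum_Ico_eq_sum_range, show k - (k - n) = n by omega]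
      apply Finset.sum_congr rfl
      intro t ht
      rw [Finset.mem_range] at ht
      have h2 : numAvoiding t k = f (t + k) := ih t (by omega)
      rw [numAvoiding_eq, A_eq_of_lt (by omega), card_T] at h2
      rw [show n + (k - n + t) = t + k by omega, ← h2]
    have := pow_sum_aux n
    omega
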